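/- Let (A, d) be an EReal-category and let L := {p : A → EReal | ∀ a b, p b - p a ≤ d a b} be the set of nonexpansive maps from A to EReal. Then (A, L) is an EReal-extended L-convex set: (a) for every subset S ⊆ L, the pointwise supremum fun a ↦ ⨆_{p ∈ S} p a and the pointwise infimum fun a ↦ ⨅_{p ∈ S} p a belong to L; (b) for every p ∈ L and every α : EReal, the function fun a ↦ p a ⊕ α belongs to L. -/

import Mathlib

/-- Dual addition on `EReal`: `x ⊕ y = -((-x) + (-y))`. -/
noncomputable def oplus (x y : EReal) : EReal := -((-x) + (-y))

/-- The set of nonexpansive maps from an `EReal`-category `(A, d)` to `EReal`. -/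
def nonexp {A : Type*} (d : A → A → EReal) : Set (A → EReal) :=
  {p | ∀ a b, p b - p a ≤ d a b}

lemma oplus_coe (x : EReal) (r : ℝ) : oplus x r = x + r := by
  induction x with
  | bot => simp [oplus]
  | coe a => simp only [oplus]; norm_cast; ring
  | top => simp [oplus]

lemma add_sub_add_cancel' (x y : EReal) (r : ℝ) : (x + r) - (y + r) = x - y := by
  induction x with
  | bot => simp
  | coe a =>
    induction y with
    | bot => simp [← EReal.coe_add, EReal.sub_bot]
    | coe b => norm_cast; ring
    | top => simp [← EReal.coe_add, EReal.sub_top]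
  | top =>
    induction y with
    | bot => simp [EReal.sub_bot]
    | coe b => simp [← EReal.coe_add, EReal.top_sub_coe]
    | top => simp [EReal.sub_top]

theorem nonexp_is_extended_L_convex {A : Type*} (d : A → A → EReal)
    (htri : ∀ a b c, d a c ≤ oplus (d a b) (d b c))
    (hid : ∀ a, d a a ≤ 0) :
    (∀ S ⊆ nonexp d,
      (fun a => ⨆ p ∈ S, p a) ∈ nonexp d ∧ (fun a => ⨅ p ∈ S, p a) ∈ nonexp d) ∧
    (∀ p ∈ nonexp d, ∀ α : EReal, (fun a => oplus (p a) α) ∈ nonexp d) := by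
  constructor
  · intro S hS
    constructor
    · intro a b
      dsimp only
      rcases eq_or_ne (d a b) ⊤ with hd | hd
      · rw [hd]; exact le_top
      rcases eq_or_ne (⨆ p ∈ S, p a) ⊤ with ha | ha
      · simp only [ha, EReal.sub_top]; exact bot_le
      · apply EReal.sub_le_of_le_add'
        apply iSup₂_le
        intro p hp
        have hpa : p a ≠ ⊤ := by
          intro h
          exact ha (top_le_iff.1 (h ▸ le_iSup₂ (f := fun p (_ : p ∈ S) => p a) p hp))
        have h1 : p b ≤ d a b + p a :=
          (EReal.sub_le_iff_le_add (Or.inr hd) (Or.inl hpa)).1 (hS hp a b)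
        calc p b ≤ d a b + p a := h1
          _ ≤ d a b + ⨆ p ∈ S, p a :=
            add_le_add_right (le_iSup₂ (f := fun p (_ : p ∈ S) => p a) p hp) _
          _ = (⨆ p ∈ S, p a) + d a b := add_comm _ _
    · intro a b
      dsimp only
      rcases eq_or_ne (d a b) ⊤ with hd | hd
      · rw [hd]; exact le_top
      rcases eq_or_ne (d a b) ⊥ with hb | hb
      · rcases eq_or_ne (⨅ p ∈ S, p a) ⊤ with ha | ha
        · simp only [ha, EReal.sub_top]; exact bot_le
        · have : (⨅ p ∈ S, p a) < ⊤ := ha.lt_top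
          simp only [iInf_lt_iff] at this
          obtain ⟨p, hp, hpa⟩ := this
          have h1 := hS hp a b
          rw [hb, le_bot_iff, sub_eq_add_neg, EReal.add_eq_bot_iff] at h1
          have hpb : p b = ⊥ := by
            rcases h1 with h | h
            · exact h
            · exact absurd (EReal.neg_eq_bot_iff.1 h) hpa.ne
          have h2 : (⨅ p ∈ S, p b) = ⊥ :=
            le_bot_iff.1 ((iInf₂_le (f := fun p (_ : p ∈ S) => p b) p hp).trans_eq hpb)
          rw [h2, EReal.bot_sub]
          exact bot_le
      · apply EReal.sub_le_of_le_add'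
        by_contra h
        push_neg at h
        have h2 : (⨅ p ∈ S, p a) < (⨅ p ∈ S, p b) - d a b := by
          rw [EReal.lt_sub_iff_add_lt (Or.inl hb) (Or.inl hd)]
          exact h
        simp only [iInf_lt_iff] at h2
        obtain ⟨p, hp, hpa⟩ := h2
        have hpat : p a ≠ ⊤ := hpa.ne_top
        have h4 : p b ≤ d a b + p a :=
          (EReal.sub_le_iff_le_add (Or.inr hd) (Or.inl hpat)).1 (hS hp a b)
        have h5 : p a + d a b < ⨅ p ∈ S, p b :=
          (EReal.lt_sub_iff_add_lt (Or.inl hb) (Or.inl hd)).1 hpa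
        have h6 : (⨅ p ∈ S, p b) ≤ p b := iInf₂_le (f := fun p (_ : p ∈ S) => p b) p hp
        have := h5.trans_le (h6.trans h4)
        rw [add_comm] at this
        exact lt_irrefl _ this
  · intro p hp α a b
    dsimp only
    induction α with
    | bot =>
      rcases eq_or_ne (p b) ⊤ with hb | hb
      · rcases eq_or_ne (p a) ⊤ with ha | ha
        · simp [oplus, hb, ha, EReal.sub_top]
        · have h1 : oplus (p a) ⊥ = ⊥ := by
            simp [oplus, EReal.add_top_of_ne_bot (fun h => ha (EReal.neg_eq_bot_iff.1 h))]
          have h2 : oplus (p b) ⊥ = ⊤ := by simp [oplus, hb]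
          rw [h1, h2]
          have := hp a b
          rw [hb, sub_eq_add_neg, EReal.top_add_of_ne_bot (fun h => ha (EReal.neg_eq_bot_iff.1 h))] at this
          rw [EReal.sub_bot (by simp)]
          exact this
      · have h1 : oplus (p b) ⊥ = ⊥ := by
          simp [oplus, EReal.add_top_of_ne_bot (fun h => hb (EReal.neg_eq_bot_iff.1 h))]
        rw [h1, EReal.bot_sub]
        exact bot_le
    | coe r => simp only [oplus_coe, add_sub_add_cancel']; exact hp a b
    | top => simp [oplus, EReal.sub_top]
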